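/- Let G be a group with maps B₁, B₂: G → G such that the descendent operation a ∘ b = B₁(a)·b·B₂(a) is associative. Then for every a ∈ G, the element e_a = B₁(a)^{-1}·a·B₂(a)^{-1} is a left identity of the semigroup (G, ∘): e_a ∘ b = b for all b ∈ G. -/
import Mathlib

theorem stmt_7 {G : Type*} [Group G] (B₁ B₂ : G → G)
    (circ : G → G → G) (hcirc : ∀ a b, circ a b = B₁ a * b * B₂ a)
    (hassoc : ∀ a b c : G, circ (circ a b) c = circ a (circ b c)) :
    ∀ a b : G, circ ((B₁ a)⁻¹ * a * (B₂ a)⁻¹) b = b := by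
  intro a b
  have h1 : circ a ((B₁ a)⁻¹ * a * (B₂ a)⁻¹) = a := by rw [hcirc]; group
  have h2 := hassoc a ((B₁ a)⁻¹ * a * (B₂ a)⁻¹) b
  rw [h1, hcirc a b, hcirc a (circ _ b)] at h2
  exact (mul_left_cancel (mul_right_cancel h2)).symm
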